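/- Let G be a finite p-group and M a G-module (an abelian group with G-action). If the group cohomology H^i(G, M) vanishes for all i ≥ 0, then multiplication by p is a bijection on M (i.e., M is uniquely p-divisible). -/

import Mathlib

theorem aux_pgroup_trivial (p : ℕ) [Fact p.Prime] (G : Type) [Group G] [Fintype G]
    (hG : IsPGroup p G) (V : Type) [AddCommGroup V] [Module (ZMod p) V] (σ : G → V → V)
    (hadd : ∀ g x y, σ g (x + y) = σ g x + σ g y)
    (hone : ∀ x, σ 1 x = x) (hmul : ∀ g h x, σ (g * h) x = σ g (σ h x))
    (hfix : ∀ v : V, (∀ g, σ g v = v) → v = 0) : ∀ v : V, v = 0 := by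
  have hprime : p.Prime := Fact.out
  haveI : NeZero p := ⟨hprime.ne_zero⟩
  have hp : ∀ v : V, p • v = 0 := fun v => by
    have : ((p : ZMod p)) • v = p • v := Nat.cast_smul_eq_nsmul (ZMod p) p v
    rw [← this, ZMod.natCast_self, zero_smul]
  intro v
  by_contra hv
  let σ' : G → V →+ V := fun g => AddMonoidHom.mk' (σ g) (hadd g)
  let W : Submodule (ZMod p) V := Submodule.span (ZMod p) (Set.range fun g : G => σ g v)
  have hW : ∀ (g : G) (w : V), w ∈ W → σ g w ∈ W := by
    intro g w hw
    induction hw using Submodule.span_induction with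
    | mem x hx =>
      obtain ⟨h, rfl⟩ := hx
      exact Submodule.subset_span ⟨g * h, hmul g h v⟩
    | zero =>
      rw [show σ g (0:V) = 0 from (σ' g).map_zero]
      exact W.zero_mem
    | add x y _ _ hx hy => rw [hadd]; exact W.add_mem hx hy
    | smul c x _ hx =>
      have hc : σ g (c • x) = c • σ g x := ZMod.map_smul (σ' g) c x
      rw [hc]; exact W.smul_mem c hx
  haveI : Module.Finite (ZMod p) W :=
    Module.Finite.span_of_finite (ZMod p) (Set.finite_range _)
  haveI : Finite W := Module.finite_of_finite (ZMod p)
  letI : MulAction G W :=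
    { smul := fun g w => ⟨σ g w.1, hW g w.1 w.2⟩
      one_smul := fun w => Subtype.ext (hone w.1)
      mul_smul := fun g h w => Subtype.ext (hmul g h w.1) }
  have hvW : v ∈ W := Submodule.subset_span ⟨1, hone v⟩
  have hx : (⟨v, hvW⟩ : W) ≠ 0 := fun h => hv (congrArg Subtype.val h)
  have hcard : p ∣ Nat.card W := by
    have h1 : addOrderOf (⟨v, hvW⟩ : W) ∣ p :=
      addOrderOf_dvd_of_nsmul_eq_zero (Subtype.ext (hp v))
    have h2 : addOrderOf (⟨v, hvW⟩ : W) = p := by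
      rcases hprime.eq_one_or_self_of_dvd _ h1 with h | h
      · exact absurd (AddMonoid.addOrderOf_eq_one_iff.1 h) hx
      · exact h
    have h3 := addOrderOf_dvd_natCard (⟨v, hvW⟩ : W)
    rwa [h2] at h3
  have hσ0 : ∀ g : G, σ g 0 = 0 := fun g => (σ' g).map_zero
  have h0fix : (0 : W) ∈ MulAction.fixedPoints G W := fun g => Subtype.ext (hσ0 g)
  obtain ⟨b, hb, hne⟩ := hG.exists_fixed_point_of_prime_dvd_card_of_fixed_point (α := W) hcard h0fix
  have hb0 : b.1 = 0 := hfix b.1 (fun g => congrArg Subtype.val (hb g))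
  exact hne (Subtype.ext (by simp [hb0])).symm

attribute [local instance 2000] Rep.hV2 Submodule.module

open groupCohomology

/-- If `G` is a finite `p`-group and `M` is a `G`-module all of whose cohomology groups
`H^i(G, M)` vanish, then multiplication by `p` is a bijection on `M`. -/
theorem stmt_0 (p : ℕ) [Fact p.Prime] (G : Type) [Group G] [Fintype G]
    (hG : IsPGroup p G) (M : Rep ℤ G)
    (hvan : ∀ i : ℕ, ∀ x : groupCohomology M i, x = 0) :
    Function.Bijective (fun m : M => p • m) := by
  haveI : NeZero p := ⟨(Fact.out (p := p.Prime)).ne_zero⟩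
  -- Step 1: invariants vanish, from H^0 = 0.
  have h0 : ∀ m : M, (∀ g : G, M.ρ g m = m) → m = 0 := by
    intro m hm
    have hmem : m ∈ M.ρ.invariants := hm
    have hx : (⟨m, hmem⟩ : M.ρ.invariants) = 0 := by
      calc (⟨m, hmem⟩ : M.ρ.invariants)
          = (H0Iso M).hom ((H0Iso M).inv ⟨m, hmem⟩) := by simp
        _ = (H0Iso M).hom 0 := by rw [hvan 0 ((H0Iso M).inv ⟨m, hmem⟩)]
        _ = 0 := map_zero _
    exact congrArg Subtype.val hx
  -- Step 2: every 1-cocycle is a coboundary, from H^1 = 0.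
  have h1 : ∀ f : cocycles₁ M, ∃ x : M, ∀ g : G, M.ρ g x - x = f g := by
    intro f
    obtain ⟨x, hx⟩ := (H1π_eq_zero_iff f).1 (hvan 1 _)
    exact ⟨x, fun g => congrFun hx g⟩
  -- Step 3: p-torsion is trivial, hence injectivity.
  have hinj : ∀ m : M, p • m = 0 → m = 0 := by
    intro m hm
    let K : AddSubgroup M :=
      { carrier := {x : M | p • x = 0}
        add_mem' := fun {a b} ha hb => by
          simp only [Set.mem_setOf_eq] at *
          rw [smul_add, ha, hb, add_zero]
        zero_mem' := by simp
        neg_mem' := fun {a} ha => by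
          simp only [Set.mem_setOf_eq] at *
          rw [smul_neg, ha, neg_zero] }
    letI : Module (ZMod p) K := AddCommGroup.zmodModule (n := p) (fun x => by
      ext
      show ((p • x : K) : M) = 0
      rw [AddSubgroup.coe_nsmul]
      exact x.2)
    have hσmem : ∀ (g : G) (x : K), p • (M.ρ g x.1) = 0 := fun g x => by
      rw [← map_nsmul, x.2, map_zero]
    have := aux_pgroup_trivial p G hG K (fun g x => ⟨M.ρ g x.1, hσmem g x⟩)
      (fun g x y => Subtype.ext (by simp))
      (fun x => Subtype.ext (by simp))
      (fun g h x => Subtype.ext (by simp))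
      (fun x hx => Subtype.ext (h0 x.1 (fun g => congrArg Subtype.val (hx g))))
      ⟨m, hm⟩
    exact congrArg Subtype.val this
  have hinj' : Function.Injective (fun m : M => p • m) := by
    intro a b hab
    have : p • (a - b) = 0 := by
      simp only at hab
      rw [smul_sub, hab, sub_self]
    have := hinj _ this
    exact sub_eq_zero.1 this
  -- Step 4: surjectivity via the quotient M/pM.
  have hsurj : ∀ m : M, ∃ x : M, p • x = m := by
    let P : AddSubgroup M := AddMonoidHom.range
      (AddMonoidHom.mk' (fun m : M => p • m) (fun a b => smul_add p a b))
    have hPmem : ∀ x : M, p • x ∈ P := fun x => ⟨x, rfl⟩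
    letI : Module (ZMod p) (M ⧸ P) := QuotientAddGroup.zmodModule hPmem
    have hρP : ∀ g : G, ∀ x ∈ P, (AddMonoidHom.mk' (fun x : M => M.ρ g x) (fun a b => map_add (M.ρ g) a b)) x ∈ P := by
      rintro g x ⟨c, rfl⟩
      exact ⟨M.ρ g c, by simp [map_nsmul]⟩
    let σ : G → (M ⧸ P) → (M ⧸ P) := fun g =>
      QuotientAddGroup.map P P (AddMonoidHom.mk' (fun x : M => M.ρ g x) (fun a b => map_add (M.ρ g) a b)) (fun x hx => hρP g x hx)
    have hσmk : ∀ (g : G) (x : M),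
        σ g (QuotientAddGroup.mk x) = QuotientAddGroup.mk (M.ρ g x) := fun g x =>
      QuotientAddGroup.map_mk _ _ _ _ _
    have hfix : ∀ q : M ⧸ P, (∀ g, σ g q = q) → q = 0 := by
      intro q
      induction q using QuotientAddGroup.induction_on with
      | H m =>
        intro hm
        have hmem : ∀ g : G, ∃ c : M, p • c = M.ρ g m - m := by
          intro g
          have := (QuotientAddGroup.eq_iff_sub_mem).1 ((hσmk g m).symm.trans (hm g))
          obtain ⟨c, hc⟩ := this
          exact ⟨c, hc⟩
        choose c hc using hmem
        have hcoc : c ∈ cocycles₁ M := by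
          refine (mem_cocycles₁_iff c).2 fun g h => ?_
          apply hinj'
          show p • c (g * h) = p • (M.ρ g (c h) + c g)
          rw [hc, smul_add, hc, ← map_nsmul, hc, map_mul, Module.End.mul_apply, map_sub]
          abel
        obtain ⟨x, hx⟩ := h1 ⟨c, hcoc⟩
        have hfinal : ∀ g : G, M.ρ g (m - p • x) = m - p • x := by
          intro g
          have hxg : M.ρ g x - x = c g := hx g
          have : M.ρ g m - m = p • (M.ρ g x - x) := by rw [hxg, hc]
          rw [map_sub, map_nsmul]
          rw [smul_sub] at this
          have := sub_eq_sub_iff_sub_eq_sub.1 this.symm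
          -- this : p • M.ρ g x - M.ρ g m = p • x - m  (roughly); just solve linearly
          linear_combination (norm := abel) -this
        have : m - p • x = 0 := h0 _ hfinal
        have hmP : m ∈ P := ⟨x, by rw [← sub_eq_zero]; exact (by simpa [sub_eq_zero, eq_comm] using this : p • x - m = 0) ▸ rfl⟩
        exact (QuotientAddGroup.eq_zero_iff m).2 hmP
    have htriv := aux_pgroup_trivial p G hG (M ⧸ P) σ
      (fun g x y => map_add (QuotientAddGroup.map P P (AddMonoidHom.mk' (fun x : M => M.ρ g x) (fun a b => map_add (M.ρ g) a b)) _) x y)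
      (by
        intro x
        induction x using QuotientAddGroup.induction_on with
        | H m =>
          rw [hσmk]
          exact congrArg _ (by rw [map_one]; rfl))
      (by
        intro g h x
        induction x using QuotientAddGroup.induction_on with
        | H m =>
          rw [hσmk (g * h) m, hσmk h m, hσmk g (M.ρ h m), map_mul, Module.End.mul_apply])
      hfix
    intro m
    have := htriv (QuotientAddGroup.mk m)
    obtain ⟨x, hx⟩ := (QuotientAddGroup.eq_zero_iff m).1 this
    exact ⟨x, hx⟩
  exact ⟨hinj', fun m => by obtain ⟨x, hx⟩ := hsurj m; exact ⟨x, hx⟩⟩
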